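/- arXiv:2602.22190 — 3 statements merged into one kernel-verified Lean document; each statement's English description precedes it below -/
import Mathlib

section
/- Consider a goal-conditioned MDP with finite horizon H, finite state space S, and finite action set A. Suppose that whenever an episode under policy π fails, there exists some step t ≤ H with a_t ∉ A*(s_t). Let d_{π,t} denote the state visitation distribution at step t, assume supp(d_{π,t}) ⊆ supp(d_μ) for all t, and define C(π) = max_t sup_{s: d_μ(s)>0} d_{π,t}(s)/d_μ(s), M_off(π) = E_{s∼d_μ}[π(ã(s)|s)] where ã(s) ∈ A*(s) is the demonstrated action, and η̄_π = E_{s∼d_μ}[π(A*(s)\{ã(s)} | s)]. Then the success probability J(π) satisfies J(π) ≥ 1 − H·C(π)·(1 − M_off(π) − η̄_π). -/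
open Finset

/-- Offline-to-online bound under partial verifiability:
`J(π) ≥ 1 − H·C(π)·(1 − M_off(π) − η̄_π)`. -/
theorem stmt1 {S A : Type*} [Fintype S] [Fintype A] [DecidableEq S] [DecidableEq A]
    (H : ℕ) (p : (Fin H → S × A) → ℝ)
    (success : (Fin H → S × A) → Prop) [DecidablePred success]
    (π : S → A → ℝ) (dμ : S → ℝ) (dπ : Fin H → S → ℝ)
    (Astar : S → Finset A) (atilde : S → A) (C : ℝ)
    (hp0 : ∀ τ, 0 ≤ p τ) (hp1 : ∑ τ, p τ = 1)
    (hdμ0 : ∀ s, 0 ≤ dμ s) (hdμ1 : ∑ s, dμ s = 1)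
    (hπ0 : ∀ s a, 0 ≤ π s a) (hπ1 : ∀ s, ∑ a, π s a = 1)
    (hat : ∀ s, atilde s ∈ Astar s)
    -- state visitation distribution at step t
    (hvisit : ∀ t s, dπ t s = ∑ τ ∈ Finset.univ.filter (fun τ => (τ t).1 = s), p τ)
    -- Markov policy consistency: P(s_t = s, a_t = a) = d_{π,t}(s)·π(a|s)
    (hpolicy : ∀ t s a,
      ∑ τ ∈ Finset.univ.filter (fun τ => τ t = (s, a)), p τ = dπ t s * π s a)
    -- failure implies some step takes an invalid action
    (hfail : ∀ τ, 0 < p τ → ¬ success τ → ∃ t, (τ t).2 ∉ Astar ((τ t).1))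
    -- support condition supp(d_{π,t}) ⊆ supp(d_μ)
    (hsupp : ∀ t s, 0 < dπ t s → 0 < dμ s)
    -- occupancy mismatch C(π)
    (hC : ∀ t s, 0 < dμ s → dπ t s ≤ C * dμ s) :
    1 - (H : ℝ) * C * (1 - (∑ s, dμ s * π s (atilde s))
        - ∑ s, dμ s * ∑ a ∈ (Astar s).erase (atilde s), π s a)
      ≤ ∑ τ ∈ Finset.univ.filter (fun τ => success τ), p τ := by
  classical
  set X : ℝ := 1 - (∑ s, dμ s * π s (atilde s))
      - ∑ s, dμ s * ∑ a ∈ (Astar s).erase (atilde s), π s a with hX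
  have hdπ0 : ∀ t s, 0 ≤ dπ t s := by
    intro t s; rw [hvisit]; exact Finset.sum_nonneg fun τ _ => hp0 τ
  have hdπmu : ∀ t s, dπ t s ≤ C * dμ s := by
    intro t s
    by_cases h : 0 < dμ s
    · exact hC t s h
    · have h0 : dμ s = 0 := le_antisymm (not_lt.mp h) (hdμ0 s)
      have h1 : dπ t s = 0 := by
        by_contra h'
        exact h (hsupp t s (lt_of_le_of_ne (hdπ0 t s) (Ne.symm h')))
      simp [h0, h1]
  have key : ∀ t : Fin H,
      (∑ τ ∈ Finset.univ.filter (fun τ => (τ t).2 ∉ Astar ((τ t).1)), p τ) ≤ C * X := by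
    intro t
    have fib : (∑ τ ∈ Finset.univ.filter (fun τ => (τ t).2 ∉ Astar ((τ t).1)), p τ)
        = ∑ sa : S × A, if sa.2 ∉ Astar sa.1 then dπ t sa.1 * π sa.1 sa.2 else 0 := by
      rw [Finset.sum_filter,
        ← Finset.sum_fiberwise Finset.univ (fun τ => τ t)
          (fun τ => if (τ t).2 ∉ Astar ((τ t).1) then p τ else 0)]
      refine Finset.sum_congr rfl fun sa _ => ?_
      rw [← hpolicy t sa.1 sa.2]
      by_cases h : sa.2 ∉ Astar sa.1
      · rw [if_pos h]
        refine Finset.sum_congr (by ext τ; simp) fun τ hτ => ?_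
        have hτt : τ t = sa := (Finset.mem_filter.mp hτ).2
        simp [hτt, h]
      · rw [if_neg h]
        refine Finset.sum_eq_zero fun τ hτ => ?_
        have hτt : τ t = sa := (Finset.mem_filter.mp hτ).2
        simp [hτt, h]
    rw [fib]
    have step : (∑ sa : S × A, if sa.2 ∉ Astar sa.1 then dπ t sa.1 * π sa.1 sa.2 else 0)
        ≤ ∑ sa : S × A, if sa.2 ∉ Astar sa.1 then C * dμ sa.1 * π sa.1 sa.2 else 0 := by
      refine Finset.sum_le_sum fun sa _ => ?_
      by_cases h : sa.2 ∉ Astar sa.1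
      · simp only [h, if_true]
        exact mul_le_mul_of_nonneg_right (hdπmu t sa.1) (hπ0 sa.1 sa.2)
      · simp [h]
    refine step.trans_eq ?_
    rw [Fintype.sum_prod_type]
    have inner : ∀ s : S,
        (∑ a : A, if a ∉ Astar s then C * dμ s * π s a else 0)
        = C * (dμ s * (1 - π s (atilde s) - ∑ a ∈ (Astar s).erase (atilde s), π s a)) := by
      intro s
      have h1 : (∑ a : A, if a ∉ Astar s then C * dμ s * π s a else 0)
          = C * dμ s * ∑ a ∈ Finset.univ.filter (fun a => a ∉ Astar s), π s a := by
        rw [Finset.mul_sum, Finset.sum_filter]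
      have h2 : (∑ a ∈ Finset.univ.filter (fun a => a ∉ Astar s), π s a)
          = 1 - ∑ a ∈ Astar s, π s a := by
        have := Finset.sum_filter_add_sum_filter_not Finset.univ (fun a => a ∉ Astar s)
          (fun a => π s a)
        have hfilt : Finset.univ.filter (fun a => ¬ a ∉ Astar s) = Astar s := by
          ext a; simp
        rw [hfilt] at this
        linarith [hπ1 s, this]
      have h3 : (∑ a ∈ Astar s, π s a)
          = π s (atilde s) + ∑ a ∈ (Astar s).erase (atilde s), π s a :=
        (Finset.add_sum_erase _ _ (hat s)).symm
      rw [h1, h2, h3]; ring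
    rw [Finset.sum_congr rfl fun s _ => inner s, ← Finset.mul_sum]
    congr 1
    have expand : (∑ s, dμ s * (1 - π s (atilde s)
          - ∑ a ∈ (Astar s).erase (atilde s), π s a))
        = (∑ s, dμ s) - (∑ s, dμ s * π s (atilde s))
          - ∑ s, dμ s * ∑ a ∈ (Astar s).erase (atilde s), π s a := by
      rw [← Finset.sum_sub_distrib, ← Finset.sum_sub_distrib]
      exact Finset.sum_congr rfl fun s _ => by ring
    rw [hX, expand, hdμ1]
  -- union bound
  have union : (∑ τ ∈ Finset.univ.filter (fun τ => ¬ success τ), p τ)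
      ≤ ∑ t : Fin H, ∑ τ ∈ Finset.univ.filter (fun τ => (τ t).2 ∉ Astar ((τ t).1)), p τ := by
    have h1 : (∑ τ ∈ Finset.univ.filter (fun τ => ¬ success τ), p τ)
        ≤ ∑ τ : Fin H → S × A, ∑ t : Fin H,
            if (τ t).2 ∉ Astar ((τ t).1) then p τ else 0 := by
      rw [Finset.sum_filter]
      refine Finset.sum_le_sum fun τ _ => ?_
      by_cases hs : success τ
      · simp only [hs, not_true, if_false]
        exact Finset.sum_nonneg fun t _ => by split_ifs <;> simp [hp0 τ]
      · simp only [hs, not_false_iff, if_true]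
        rcases lt_or_eq_of_le (hp0 τ) with hp | hp
        · obtain ⟨t, ht⟩ := hfail τ hp hs
          calc p τ = (if (τ t).2 ∉ Astar ((τ t).1) then p τ else 0) := by simp [ht]
            _ ≤ _ := Finset.single_le_sum (f := fun t =>
                if (τ t).2 ∉ Astar ((τ t).1) then p τ else 0)
                (fun t _ => by beta_reduce; split_ifs <;> simp [hp0 τ]) (Finset.mem_univ t)
        · rw [← hp]
          exact Finset.sum_nonneg fun t _ => by split_ifs <;> simp [hp0 τ]
    refine h1.trans_eq ?_
    rw [Finset.sum_comm]
    exact Finset.sum_congr rfl fun t _ => (Finset.sum_filter _ _).symm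
  have hfailbound : (∑ τ ∈ Finset.univ.filter (fun τ => ¬ success τ), p τ)
      ≤ (H : ℝ) * C * X := by
    calc _ ≤ ∑ t : Fin H, ∑ τ ∈ Finset.univ.filter
          (fun τ => (τ t).2 ∉ Astar ((τ t).1)), p τ := union
      _ ≤ ∑ _t : Fin H, C * X := Finset.sum_le_sum fun t _ => key t
      _ = (H : ℝ) * C * X := by simp [Finset.sum_const, mul_assoc]
  have hsplit := Finset.sum_filter_add_sum_filter_not Finset.univ success p
  rw [hp1] at hsplit
  linarith
end

section
/- Let S and A be finite sets, P a transition kernel, and π, π_ref two policies satisfying KL(π(·|s)‖π_ref(·|s)) ≤ ε for every state s. Let d_{π,t} and d_{π_ref,t} be the state distributions at step t induced by running π and π_ref respectively from the same initial distribution. Then for every t ≥ 0, ‖d_{π,t} − d_{π_ref,t}‖₁ ≤ t·√(2ε). -/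
open Finset

section PinskerAux

noncomputable def Gfun (x : ℝ) : ℝ := 2*(x+2)*(x*Real.log x - x + 1) - 3*(x-1)^2

noncomputable def Hfun (x : ℝ) : ℝ := (x+1)*Real.log x - 2*(x-1)

lemma Hfun_deriv {x : ℝ} (hx : 0 < x) :
    HasDerivAt Hfun (Real.log x + 1/x - 1) x := by
  have h1 : HasDerivAt (fun x : ℝ => (x+1)*Real.log x)
      (1 * Real.log x + (x+1) * x⁻¹) x :=
    ((hasDerivAt_id x).add_const 1).mul (Real.hasDerivAt_log hx.ne')
  have h2 : HasDerivAt (fun x : ℝ => 2*(x-1)) 2 x := by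
    simpa using ((hasDerivAt_id x).sub_const 1).const_mul 2
  have := h1.sub h2
  refine this.congr_deriv ?_
  field_simp
  ring

lemma Hfun_mono : MonotoneOn Hfun (Set.Ioi (0:ℝ)) := by
  have hderiv : ∀ x ∈ interior (Set.Ioi (0:ℝ)), 0 ≤ deriv Hfun x := by
    intro x hx
    rw [interior_Ioi] at hx
    rw [(Hfun_deriv hx).deriv]
    have := Real.one_sub_inv_le_log_of_pos hx
    rw [one_div]; linarith [this]
  exact monotoneOn_of_deriv_nonneg (convex_Ioi 0)
    (fun x hx => ((Hfun_deriv hx).continuousAt.continuousWithinAt))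
    (fun x hx => ((Hfun_deriv (by rwa [interior_Ioi] at hx)).differentiableAt.differentiableWithinAt))
    hderiv

lemma Gfun_deriv {x : ℝ} (hx : 0 < x) :
    HasDerivAt Gfun (4 * Hfun x) x := by
  have hlog : HasDerivAt (fun x : ℝ => x * Real.log x) (Real.log x + 1) x := by
    have := (hasDerivAt_id x).mul (Real.hasDerivAt_log hx.ne')
    refine this.congr_deriv ?_
    field_simp
    simp only [id]; ring
  have h1 : HasDerivAt (fun x : ℝ => x*Real.log x - x + 1) (Real.log x + 1 - 1) x :=
    (hlog.sub (hasDerivAt_id x)).add_const 1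
  have h2 : HasDerivAt (fun x : ℝ => 2*(x+2)) 2 x := by
    simpa using ((hasDerivAt_id x).add_const 2).const_mul 2
  have h3 := (h2.mul h1)
  have h4 : HasDerivAt (fun x : ℝ => 3*(x-1)^2) (3*(2*(x-1))) x := by
    have := (((hasDerivAt_id x).sub_const 1).pow 2).const_mul 3
    simpa using this
  have := h3.sub h4
  refine this.congr_deriv ?_
  unfold Hfun
  ring

lemma Gfun_nonneg {x : ℝ} (hx : 0 ≤ x) : 0 ≤ Gfun x := by
  have hG1 : Gfun 1 = 0 := by simp [Gfun]
  have hcont : Continuous Gfun := by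
    have := Real.continuous_mul_log
    unfold Gfun
    fun_prop
  have hH1 : Hfun 1 = 0 := by simp [Hfun]
  rcases le_or_gt 1 x with h | h
  · have hmono : MonotoneOn Gfun (Set.Ici (1:ℝ)) := by
      apply monotoneOn_of_deriv_nonneg (convex_Ici 1) hcont.continuousOn
      · intro y hy
        rw [interior_Ici] at hy
        exact (Gfun_deriv (lt_trans one_pos hy)).differentiableAt.differentiableWithinAt
      · intro y hy
        rw [interior_Ici] at hy
        rw [(Gfun_deriv (lt_trans one_pos hy)).deriv]
        have : Hfun 1 ≤ Hfun y :=
          Hfun_mono (Set.mem_Ioi.2 one_pos) (Set.mem_Ioi.2 (lt_trans one_pos hy)) hy.le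
        rw [hH1] at this
        linarith
    have := hmono (Set.mem_Ici.2 le_rfl) (Set.mem_Ici.2 h) h
    rw [hG1] at this; exact this
  · have hanti : AntitoneOn Gfun (Set.Icc (0:ℝ) 1) := by
      apply antitoneOn_of_deriv_nonpos (convex_Icc 0 1) hcont.continuousOn
      · intro y hy
        rw [interior_Icc] at hy
        exact (Gfun_deriv hy.1).differentiableAt.differentiableWithinAt
      · intro y hy
        rw [interior_Icc] at hy
        rw [(Gfun_deriv hy.1).deriv]
        have : Hfun y ≤ Hfun 1 :=
          Hfun_mono (Set.mem_Ioi.2 hy.1) (Set.mem_Ioi.2 one_pos) hy.2.le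
        rw [hH1] at this
        linarith
    have := hanti (Set.mem_Icc.2 ⟨hx, h.le⟩) (Set.mem_Icc.2 ⟨zero_le_one, le_rfl⟩) h.le
    rw [hG1] at this; exact this

/-- pointwise: (p-q)^2 ≤ (2(p+2q)/3) * (p log(p/q) - p + q) -/
lemma pointwise_pinsker {p q : ℝ} (hp : 0 ≤ p) (hq : 0 ≤ q) (habs : q = 0 → p = 0) :
    (p - q)^2 ≤ (2*(p + 2*q)/3) * (p * Real.log (p/q) - p + q) := by
  rcases eq_or_lt_of_le hq with h | hqpos
  · have hp0 := habs h.symm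
    simp [hp0, ← h]
  · set x := p / q with hxdef
    have hx0 : 0 ≤ x := div_nonneg hp hqpos.le
    have hpx : p = x * q := by rw [hxdef, div_mul_cancel₀ p hqpos.ne']
    have hkey := Gfun_nonneg hx0
    unfold Gfun at hkey
    rw [show Real.log (p/q) = Real.log x from by rw [hxdef]]
    rw [hpx]
    nlinarith [mul_nonneg (sq_nonneg q) hkey]

/-- Pinsker-style L1 bound for finite probability vectors. -/
lemma l1_le_sqrt_two_kl {A : Type*} [Fintype A] (p q : A → ℝ) (ε : ℝ)
    (hp0 : ∀ a, 0 ≤ p a) (hp1 : ∑ a, p a = 1)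
    (hq0 : ∀ a, 0 ≤ q a) (hq1 : ∑ a, q a = 1)
    (habs : ∀ a, q a = 0 → p a = 0)
    (hKL : ∑ a, p a * Real.log (p a / q a) ≤ ε) :
    ∑ a, |p a - q a| ≤ Real.sqrt (2 * ε) := by
  set w : A → ℝ := fun a => 2*(p a + 2*q a)/3 with hw
  set g : A → ℝ := fun a => if w a = 0 then 0 else (p a - q a)^2 / w a with hg
  have hw0 : ∀ a, 0 ≤ w a := fun a => by
    have := hp0 a; have := hq0 a; simp only [hw]; positivity
  have hg0 : ∀ a, 0 ≤ g a := fun a => by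
    simp only [hg]
    split
    · exact le_rfl
    · exact div_nonneg (sq_nonneg _) (hw0 a)
  have hwzero : ∀ a, w a = 0 → p a = 0 ∧ q a = 0 := by
    intro a ha
    simp only [hw] at ha
    constructor <;> nlinarith [hp0 a, hq0 a]
  have hsq : ∀ a ∈ Finset.univ (α := A), |p a - q a| ^ 2 = w a * g a := by
    intro a _
    by_cases h : w a = 0
    · obtain ⟨h1, h2⟩ := hwzero a h
      simp [hg, h, h1, h2]
    · simp only [hg, if_neg h, sq_abs]
      field_simp
  have hCS := Finset.sum_sq_le_sum_mul_sum_of_sq_eq_mul Finset.univ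
    (fun a _ => hw0 a) (fun a _ => hg0 a) hsq
  have hsumw : ∑ a, w a = 2 := by
    have he : ∀ a, w a = (2/3)*p a + (4/3)*q a := fun a => by simp only [hw]; ring
    simp_rw [he]
    rw [Finset.sum_add_distrib, ← Finset.mul_sum, ← Finset.mul_sum, hp1, hq1]
    norm_num
  have hsumg : ∑ a, g a ≤ ε := by
    have hle : ∀ a, g a ≤ p a * Real.log (p a / q a) - p a + q a := by
      intro a
      by_cases h : w a = 0
      · obtain ⟨h1, h2⟩ := hwzero a h
        simp [hg, h, h1, h2]
      · simp only [hg, if_neg h]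
        rw [div_le_iff₀ (lt_of_le_of_ne (hw0 a) (Ne.symm h))]
        calc (p a - q a)^2 ≤ (2*(p a + 2*q a)/3) * (p a * Real.log (p a / q a) - p a + q a) :=
              pointwise_pinsker (hp0 a) (hq0 a) (habs a)
        _ = (p a * Real.log (p a / q a) - p a + q a) * w a := by rw [hw]; ring
    calc ∑ a, g a ≤ ∑ a, (p a * Real.log (p a / q a) - p a + q a) :=
          Finset.sum_le_sum (fun a _ => hle a)
    _ = (∑ a, p a * Real.log (p a / q a)) - (∑ a, p a) + (∑ a, q a) := by
          rw [Finset.sum_add_distrib, Finset.sum_sub_distrib]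
    _ ≤ ε := by rw [hp1, hq1]; linarith
  have habs_nonneg : 0 ≤ ∑ a, |p a - q a| := Finset.sum_nonneg (fun a _ => abs_nonneg _)
  have hfinal : (∑ a, |p a - q a|) ^ 2 ≤ 2 * ε := by
    calc (∑ a, |p a - q a|) ^ 2 ≤ (∑ a, w a) * ∑ a, g a := hCS
    _ ≤ 2 * ε := by
        rw [hsumw]
        have h2 : (0:ℝ) ≤ ∑ a, g a := Finset.sum_nonneg (fun a _ => hg0 a)
        linarith
  have h2e : (0:ℝ) ≤ 2*ε := le_trans (sq_nonneg _) hfinal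
  exact (Real.le_sqrt habs_nonneg h2e).mpr hfinal

end PinskerAux

/-- Telescoping bound: per-state `KL(π(·|s)‖π_ref(·|s)) ≤ ε` implies
`‖d_{π,t} − d_{π_ref,t}‖₁ ≤ t·√(2ε)` for all `t`. -/
theorem stmt5 {S A : Type*} [Fintype S] [Fintype A]
    (P : S → A → S → ℝ) (π πref : S → A → ℝ) (ε : ℝ)
    (dπ dref : ℕ → S → ℝ)
    (hP0 : ∀ s a s', 0 ≤ P s a s') (hP1 : ∀ s a, ∑ s', P s a s' = 1)
    (hπ0 : ∀ s a, 0 ≤ π s a) (hπ1 : ∀ s, ∑ a, π s a = 1)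
    (href0 : ∀ s a, 0 ≤ πref s a) (href1 : ∀ s, ∑ a, πref s a = 1)
    (habs : ∀ s a, πref s a = 0 → π s a = 0)
    (hKL : ∀ s, ∑ a, π s a * Real.log (π s a / πref s a) ≤ ε)
    -- same initial distribution
    (hinit0 : ∀ s, 0 ≤ dref 0 s) (hinit1 : ∑ s, dref 0 s = 1)
    (h0 : ∀ s, dπ 0 s = dref 0 s)
    -- state distribution recursions
    (hrecπ : ∀ t s', dπ (t + 1) s' = ∑ s, dπ t s * ∑ a, π s a * P s a s')
    (hrecref : ∀ t s', dref (t + 1) s' = ∑ s, dref t s * ∑ a, πref s a * P s a s') :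
    ∀ t : ℕ, ∑ s, |dπ t s - dref t s| ≤ (t : ℝ) * Real.sqrt (2 * ε) := by
  -- policy L1 bound
  have hpol : ∀ s, ∑ a, |π s a - πref s a| ≤ Real.sqrt (2 * ε) := fun s =>
    l1_le_sqrt_two_kl (π s) (πref s) ε (hπ0 s) (hπ1 s) (href0 s) (href1 s) (habs s) (hKL s)
  -- transition matrices
  set M : S → S → ℝ := fun s s' => ∑ a, π s a * P s a s' with hM
  set N : S → S → ℝ := fun s s' => ∑ a, πref s a * P s a s' with hN
  have hM0 : ∀ s s', 0 ≤ M s s' :=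
    fun s s' => Finset.sum_nonneg fun a _ => mul_nonneg (hπ0 s a) (hP0 s a s')
  have hN0 : ∀ s s', 0 ≤ N s s' :=
    fun s s' => Finset.sum_nonneg fun a _ => mul_nonneg (href0 s a) (hP0 s a s')
  have hMsum : ∀ s, ∑ s', M s s' = 1 := by
    intro s
    simp only [hM]
    rw [Finset.sum_comm]
    simp_rw [← Finset.mul_sum, hP1, mul_one]
    exact hπ1 s
  have hNsum : ∀ s, ∑ s', N s s' = 1 := by
    intro s
    simp only [hN]
    rw [Finset.sum_comm]
    simp_rw [← Finset.mul_sum, hP1, mul_one]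
    exact href1 s
  have hMN : ∀ s, ∑ s', |M s s' - N s s'| ≤ Real.sqrt (2 * ε) := by
    intro s
    calc ∑ s', |M s s' - N s s'| = ∑ s', |∑ a, (π s a - πref s a) * P s a s'| := by
          simp only [hM, hN, ← Finset.sum_sub_distrib, sub_mul]
    _ ≤ ∑ s', ∑ a, |(π s a - πref s a) * P s a s'| :=
          Finset.sum_le_sum fun s' _ => Finset.abs_sum_le_sum_abs _ _
    _ = ∑ a, |π s a - πref s a| := by
          rw [Finset.sum_comm]
          refine Finset.sum_congr rfl fun a _ => ?_
          simp_rw [abs_mul]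
          rw [← Finset.mul_sum]
          have hone : ∑ s', |P s a s'| = 1 := by
            rw [← hP1 s a]
            exact Finset.sum_congr rfl fun s' _ => abs_of_nonneg (hP0 s a s')
          rw [hone, mul_one]
    _ ≤ Real.sqrt (2 * ε) := hpol s
  -- invariants for dref
  have hrefinv : ∀ t, (∀ s, 0 ≤ dref t s) ∧ (∑ s, dref t s = 1) := by
    intro t
    induction t with
    | zero => exact ⟨hinit0, hinit1⟩
    | succ t ih =>
      refine ⟨fun s' => ?_, ?_⟩
      · rw [hrecref]
        exact Finset.sum_nonneg fun s _ => mul_nonneg (ih.1 s) (hN0 s s')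
      · calc ∑ s', dref (t+1) s' = ∑ s', ∑ s, dref t s * N s s' := by
              simp_rw [hrecref]; rfl
        _ = ∑ s, dref t s * ∑ s', N s s' := by
              rw [Finset.sum_comm]; simp_rw [← Finset.mul_sum]
        _ = 1 := by simp_rw [hNsum, mul_one]; exact ih.2
  intro t
  induction t with
  | zero => simp [h0]
  | succ t ih =>
    calc ∑ s', |dπ (t+1) s' - dref (t+1) s'|
        = ∑ s', |∑ s, ((dπ t s - dref t s) * M s s' + dref t s * (M s s' - N s s'))| := by
          refine Finset.sum_congr rfl fun s' _ => ?_
          rw [hrecπ, hrecref, ← Finset.sum_sub_distrib]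
          congr 1
          refine Finset.sum_congr rfl fun s _ => ?_
          show dπ t s * M s s' - dref t s * N s s' = _
          ring
    _ ≤ ∑ s', ∑ s, (|dπ t s - dref t s| * M s s' + dref t s * |M s s' - N s s'|) := by
          refine Finset.sum_le_sum fun s' _ => ?_
          refine (Finset.abs_sum_le_sum_abs _ _).trans (Finset.sum_le_sum fun s _ => ?_)
          refine (abs_add_le _ _).trans ?_
          rw [abs_mul, abs_mul, abs_of_nonneg (hM0 s s'), abs_of_nonneg ((hrefinv t).1 s)]
    _ = (∑ s, |dπ t s - dref t s| * ∑ s', M s s') +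
          ∑ s, dref t s * ∑ s', |M s s' - N s s'| := by
          rw [Finset.sum_comm]
          simp_rw [Finset.sum_add_distrib]
          simp_rw [← Finset.mul_sum]
    _ ≤ (∑ s, |dπ t s - dref t s| * 1) + ∑ s, dref t s * Real.sqrt (2 * ε) := by
          refine add_le_add (le_of_eq ?_) (Finset.sum_le_sum fun s _ =>
            mul_le_mul_of_nonneg_left (hMN s) ((hrefinv t).1 s))
          simp_rw [hMsum]
    _ = (∑ s, |dπ t s - dref t s|) + Real.sqrt (2 * ε) := by
          rw [← Finset.sum_mul, ← Finset.sum_mul, (hrefinv t).2, mul_one, one_mul]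
    _ ≤ (t : ℝ) * Real.sqrt (2 * ε) + Real.sqrt (2 * ε) := by linarith [ih]
    _ = ((t+1 : ℕ) : ℝ) * Real.sqrt (2 * ε) := by push_cast; ring
end

section
/- Combine the previous two lemmas: if KL(π(·|s)‖π_ref(·|s)) ≤ ε for all s, d_{π_ref,t} ≪ d_μ for all t ∈ [H], ρ = inf{d_μ(s) : d_μ(s) > 0} > 0, and C(π_ref) = max_t sup_{s: d_μ(s)>0} d_{π_ref,t}(s)/d_μ(s), then the occupancy mismatch of π satisfies C(π) ≤ C(π_ref) + H√(2ε)/ρ, provided d_{π,t} ≪ d_μ for all t. -/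
open Finset

noncomputable def auxh (x : ℝ) : ℝ := Real.log x - (3/2)*(x-1)*(x+5)/(x+2)^2
noncomputable def auxg (x : ℝ) : ℝ := x * Real.log x - x + 1 - 3*(x-1)^2/(2*(x+2))

private lemma aux_hasDerivAt_h (x : ℝ) (hx : 0 < x) :
    HasDerivAt auxh (1/x - 27/(x+2)^3) x := by
  have hx2 : (x + 2 : ℝ) ≠ 0 := by positivity
  have h1 : HasDerivAt (fun x : ℝ => (3/2)*(x-1)*(x+5)) ((3/2)*(x+5) + (3/2)*(x-1)) x := by
    have := (((hasDerivAt_id x).sub_const 1).const_mul (3/2 : ℝ)).mul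
      ((hasDerivAt_id x).add_const 5)
    simpa [mul_one, Pi.mul_def] using this
  have h2 : HasDerivAt (fun x : ℝ => (x+2)^2) (2*(x+2)) x := by
    have := ((hasDerivAt_id x).add_const 2).pow 2
    simpa [mul_comm, Pi.pow_def] using this
  have h3 := h1.div h2 (by positivity)
  have h4 := (Real.hasDerivAt_log hx.ne').sub h3
  refine h4.congr_deriv ?_
  field_simp
  ring

private lemma aux_hasDerivAt_g (x : ℝ) (hx : 0 < x) :
    HasDerivAt auxg (auxh x) x := by
  have hx2 : (2*(x + 2) : ℝ) ≠ 0 := by positivity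
  have h1 : HasDerivAt (fun x : ℝ => x * Real.log x) (Real.log x + 1) x := by
    have := (hasDerivAt_id x).mul (Real.hasDerivAt_log hx.ne')
    refine this.congr_deriv ?_
    field_simp
    simp only [id]; ring
  have h2 : HasDerivAt (fun x : ℝ => 3*(x-1)^2) (3*(2*(x-1))) x := by
    have := (((hasDerivAt_id x).sub_const 1).pow 2).const_mul (3:ℝ)
    simpa [mul_comm, mul_assoc] using this
  have h3 : HasDerivAt (fun x : ℝ => 2*(x+2)) 2 x := by
    have := ((hasDerivAt_id x).add_const 2).const_mul (2:ℝ)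
    simpa using this
  have h4 := ((h1.sub (hasDerivAt_id x)).add_const 1).sub (h2.div h3 hx2)
  refine h4.congr_deriv ?_
  unfold auxh
  field_simp
  ring

private lemma aux_hderiv_nonneg (x : ℝ) (hx : 0 < x) : 0 ≤ 1/x - 27/(x+2)^3 := by
  rw [sub_nonneg, div_le_div_iff₀ (by positivity) hx]
  nlinarith [sq_nonneg (x-1), hx.le]

private lemma auxh_mono : MonotoneOn auxh (Set.Ioi (0:ℝ)) := by
  have hint : interior (Set.Ioi (0:ℝ)) = Set.Ioi 0 := interior_Ioi
  refine monotoneOn_of_deriv_nonneg (convex_Ioi 0) ?_ ?_ ?_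
  · intro x hx
    exact (aux_hasDerivAt_h x hx).continuousAt.continuousWithinAt
  · rw [hint]; intro x hx
    exact (aux_hasDerivAt_h x hx).differentiableAt.differentiableWithinAt
  · rw [hint]; intro x hx
    rw [(aux_hasDerivAt_h x hx).deriv]
    exact aux_hderiv_nonneg x hx

private lemma auxh_one : auxh 1 = 0 := by simp [auxh]

private lemma auxg_one : auxg 1 = 0 := by simp [auxg]

private lemma auxg_nonneg (x : ℝ) (hx : 0 ≤ x) : 0 ≤ auxg x := by
  rcases eq_or_lt_of_le hx with h | hx0
  · simp [auxg, ← h]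
    norm_num
  rcases le_total x 1 with hx1 | hx1
  · have hanti : AntitoneOn auxg (Set.Icc x 1) := by
      refine antitoneOn_of_deriv_nonpos (convex_Icc x 1) ?_ ?_ ?_
      · intro y hy
        exact (aux_hasDerivAt_g y (lt_of_lt_of_le hx0 hy.1)).continuousAt.continuousWithinAt
      · rw [interior_Icc]; intro y hy
        exact (aux_hasDerivAt_g y (hx0.trans hy.1)).differentiableAt.differentiableWithinAt
      · rw [interior_Icc]; intro y hy
        rw [(aux_hasDerivAt_g y (hx0.trans hy.1)).deriv]
        have := auxh_mono (Set.mem_Ioi.2 (hx0.trans hy.1)) (Set.mem_Ioi.2 one_pos) hy.2.le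
        rwa [auxh_one] at this
    have := hanti (Set.mem_Icc.2 ⟨le_refl x, hx1⟩) (Set.mem_Icc.2 ⟨hx1, le_refl 1⟩) hx1
    rwa [auxg_one] at this
  · have hmono : MonotoneOn auxg (Set.Icc 1 x) := by
      refine monotoneOn_of_deriv_nonneg (convex_Icc 1 x) ?_ ?_ ?_
      · intro y hy
        exact (aux_hasDerivAt_g y (lt_of_lt_of_le one_pos hy.1)).continuousAt.continuousWithinAt
      · rw [interior_Icc]; intro y hy
        exact (aux_hasDerivAt_g y (one_pos.trans hy.1)).differentiableAt.differentiableWithinAt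
      · rw [interior_Icc]; intro y hy
        rw [(aux_hasDerivAt_g y (one_pos.trans hy.1)).deriv]
        have := auxh_mono (Set.mem_Ioi.2 one_pos) (Set.mem_Ioi.2 (one_pos.trans hy.1)) hy.1.le
        rwa [auxh_one] at this
    have := hmono (Set.mem_Icc.2 ⟨le_refl 1, hx1⟩) (Set.mem_Icc.2 ⟨hx1, le_refl x⟩) hx1
    rwa [auxg_one] at this

private lemma aux_pointwise (x y : ℝ) (hx : 0 ≤ x) (hy : 0 < y) :
    3*(x-y)^2/(2*(x+2*y)) ≤ x * Real.log (x/y) - x + y := by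
  have h := auxg_nonneg (x/y) (by positivity)
  have hxy : (x + 2*y : ℝ) ≠ 0 := by positivity
  have key : y * auxg (x/y) = x * Real.log (x/y) - x + y - 3*(x-y)^2/(2*(x+2*y)) := by
    unfold auxg
    field_simp
  nlinarith [mul_nonneg hy.le h]

private lemma aux_pinsker {A : Type*} [Fintype A] (p q : A → ℝ)
    (hp0 : ∀ a, 0 ≤ p a) (hq0 : ∀ a, 0 ≤ q a)
    (hp1 : ∑ a, p a = 1) (hq1 : ∑ a, q a = 1)
    (habs : ∀ a, q a = 0 → p a = 0) :
    (∑ a, |p a - q a|)^2 ≤ 2 * ∑ a, p a * Real.log (p a / q a) := by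
  have hw0 : ∀ a : A, (0:ℝ) ≤ p a + 2 * q a := fun a => by
    have := hp0 a; have := hq0 a; linarith
  have hstep : ∑ a, 3*(p a - q a)^2/(2*(p a + 2*q a))
      ≤ ∑ a, p a * Real.log (p a / q a) := by
    have heq : ∑ a, p a * Real.log (p a / q a)
        = ∑ a, (p a * Real.log (p a / q a) - p a + q a) := by
      rw [Finset.sum_add_distrib, Finset.sum_sub_distrib, hp1, hq1]; ring
    rw [heq]
    apply Finset.sum_le_sum
    intro a _
    rcases eq_or_lt_of_le (hq0 a) with h | h
    · have hp := habs a h.symm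
      simp [hp, ← h]
    · exact aux_pointwise (p a) (q a) (hp0 a) h
  have cs := Finset.sum_mul_sq_le_sq_mul_sq Finset.univ
    (fun a => Real.sqrt (p a + 2*q a)) (fun a => |p a - q a| / Real.sqrt (p a + 2*q a))
  have he1 : ∀ a : A, Real.sqrt (p a + 2*q a) * (|p a - q a| / Real.sqrt (p a + 2*q a))
      = |p a - q a| := by
    intro a
    rcases eq_or_lt_of_le (hw0 a) with h | h
    · have hpa : p a = 0 := by nlinarith [hp0 a, hq0 a]
      have hqa : q a = 0 := by nlinarith [hp0 a, hq0 a]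
      simp [hpa, hqa]
    · have hc : Real.sqrt (p a + 2*q a) ≠ 0 := (Real.sqrt_ne_zero'.mpr h)
      field_simp
  have he2 : ∑ a : A, Real.sqrt (p a + 2*q a) ^ 2 = 3 := by
    have : ∀ a : A, Real.sqrt (p a + 2*q a) ^ 2 = p a + 2 * q a := fun a =>
      Real.sq_sqrt (hw0 a)
    rw [Finset.sum_congr rfl fun a _ => this a, Finset.sum_add_distrib, hp1,
      ← Finset.mul_sum, hq1]
    norm_num
  have he3 : ∀ a : A, (|p a - q a| / Real.sqrt (p a + 2*q a)) ^ 2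
      = (p a - q a)^2 / (p a + 2*q a) := by
    intro a
    rw [div_pow, sq_abs, Real.sq_sqrt (hw0 a)]
  rw [Finset.sum_congr rfl fun a _ => he1 a, he2,
    Finset.sum_congr rfl fun a _ => he3 a] at cs
  have hfin : ∑ a : A, (p a - q a)^2 / (p a + 2*q a)
      ≤ (2/3) * ∑ a, p a * Real.log (p a / q a) := by
    have : ∑ a : A, (p a - q a)^2 / (p a + 2*q a)
        = (2/3) * ∑ a, 3*(p a - q a)^2/(2*(p a + 2*q a)) := by
      rw [Finset.mul_sum]
      apply Finset.sum_congr rfl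
      intro a _
      rcases eq_or_lt_of_le (hw0 a) with h | h
      · rw [← h]; simp
      · field_simp
    rw [this]
    linarith [hstep]
  calc (∑ a, |p a - q a|)^2 ≤ 3 * ∑ a : A, (p a - q a)^2 / (p a + 2*q a) := cs
    _ ≤ 2 * ∑ a, p a * Real.log (p a / q a) := by linarith

/-- KL regularization controls the occupancy mismatch:
`C(π) ≤ C(π_ref) + H·√(2ε)/ρ`, stated pointwise over the support of `dμ`. -/
theorem stmt7 {S A : Type*} [Fintype S] [Fintype A]
    (P : S → A → S → ℝ) (π πref : S → A → ℝ) (ε ρ Cref : ℝ) (H : ℕ)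
    (dπ dref : ℕ → S → ℝ) (dμ : S → ℝ)
    (hP0 : ∀ s a s', 0 ≤ P s a s') (hP1 : ∀ s a, ∑ s', P s a s' = 1)
    (hπ0 : ∀ s a, 0 ≤ π s a) (hπ1 : ∀ s, ∑ a, π s a = 1)
    (href0 : ∀ s a, 0 ≤ πref s a) (href1 : ∀ s, ∑ a, πref s a = 1)
    (habs : ∀ s a, πref s a = 0 → π s a = 0)
    (hKL : ∀ s, ∑ a, π s a * Real.log (π s a / πref s a) ≤ ε)
    (hdμ0 : ∀ s, 0 ≤ dμ s) (hdμ1 : ∑ s, dμ s = 1)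
    -- same initial distribution and recursions
    (hinit0 : ∀ s, 0 ≤ dref 0 s) (hinit1 : ∑ s, dref 0 s = 1)
    (h0 : ∀ s, dπ 0 s = dref 0 s)
    (hrecπ : ∀ t s', dπ (t + 1) s' = ∑ s, dπ t s * ∑ a, π s a * P s a s')
    (hrecref : ∀ t s', dref (t + 1) s' = ∑ s, dref t s * ∑ a, πref s a * P s a s')
    -- absolute continuity w.r.t. dμ for all steps up to H
    (habsref : ∀ t ≤ H, ∀ s, 0 < dref t s → 0 < dμ s)
    (habsπ : ∀ t ≤ H, ∀ s, 0 < dπ t s → 0 < dμ s)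
    -- ρ lower-bounds dμ on its support
    (hρ : 0 < ρ) (hρle : ∀ s, 0 < dμ s → ρ ≤ dμ s)
    -- C(π_ref) bound
    (hCref : ∀ t ≤ H, ∀ s, 0 < dμ s → dref t s / dμ s ≤ Cref) :
    ∀ t ≤ H, ∀ s, 0 < dμ s →
      dπ t s / dμ s ≤ Cref + (H : ℝ) * Real.sqrt (2 * ε) / ρ := by
  -- per-state total variation bound from Pinsker
  have hTV : ∀ s, ∑ a, |π s a - πref s a| ≤ Real.sqrt (2*ε) := by
    intro s
    refine Real.le_sqrt_of_sq_le ?_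
    refine (aux_pinsker (π s) (πref s) (hπ0 s) (href0 s) (hπ1 s) (href1 s) (habs s)).trans ?_
    linarith [hKL s]
  -- nonnegativity and total mass of dπ
  have hdπ0 : ∀ t s, 0 ≤ dπ t s := by
    intro t
    induction t with
    | zero => intro s; rw [h0]; exact hinit0 s
    | succ t ih =>
      intro s'
      rw [hrecπ]
      exact Finset.sum_nonneg fun s _ => mul_nonneg (ih s)
        (Finset.sum_nonneg fun a _ => mul_nonneg (hπ0 s a) (hP0 s a s'))
  have hdπ1 : ∀ t, ∑ s, dπ t s = 1 := by
    intro t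
    induction t with
    | zero => rw [Finset.sum_congr rfl fun s _ => h0 s]; exact hinit1
    | succ t ih =>
      simp_rw [hrecπ]
      rw [Finset.sum_comm]
      calc ∑ s, ∑ s', dπ t s * ∑ a, π s a * P s a s'
          = ∑ s, dπ t s * ∑ a, π s a * ∑ s', P s a s' := by
            apply Finset.sum_congr rfl; intro s _
            rw [← Finset.mul_sum, Finset.sum_comm]
            congr 1
            apply Finset.sum_congr rfl; intro a _
            rw [← Finset.mul_sum]
        _ = 1 := by simp_rw [hP1, mul_one, hπ1, mul_one]; exact ih
  -- the telescoping ℓ¹ bound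
  have hD : ∀ t, ∑ s, |dπ t s - dref t s| ≤ (t : ℝ) * Real.sqrt (2*ε) := by
    intro t
    induction t with
    | zero => simp [h0]
    | succ t ih =>
      have step : ∑ s', |dπ (t+1) s' - dref (t+1) s'|
          ≤ (∑ s, |dπ t s - dref t s|) + Real.sqrt (2*ε) := by
        have hb : ∀ s', |dπ (t+1) s' - dref (t+1) s'|
            ≤ ∑ s, (|dπ t s - dref t s| * ∑ a, πref s a * P s a s'
                + dπ t s * ∑ a, |π s a - πref s a| * P s a s') := by
          intro s'
          rw [hrecπ, hrecref, ← Finset.sum_sub_distrib]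
          refine (Finset.abs_sum_le_sum_abs _ _).trans (Finset.sum_le_sum ?_)
          intro s _
          have hsplit : dπ t s * (∑ a, π s a * P s a s')
              - dref t s * (∑ a, πref s a * P s a s')
              = (dπ t s - dref t s) * (∑ a, πref s a * P s a s')
                + dπ t s * (∑ a, (π s a - πref s a) * P s a s') := by
            rw [Finset.sum_congr rfl fun a _ => sub_mul (π s a) (πref s a) (P s a s'),
              Finset.sum_sub_distrib]
            ring
          rw [hsplit]
          refine (abs_add_le _ _).trans (add_le_add ?_ ?_)
          · rw [abs_mul, abs_of_nonneg (Finset.sum_nonneg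
              fun a _ => mul_nonneg (href0 s a) (hP0 s a s'))]
          · rw [abs_mul, abs_of_nonneg (hdπ0 t s)]
            refine mul_le_mul_of_nonneg_left ?_ (hdπ0 t s)
            refine (Finset.abs_sum_le_sum_abs _ _).trans (Finset.sum_le_sum ?_)
            intro a _
            rw [abs_mul, abs_of_nonneg (hP0 s a s')]
        calc ∑ s', |dπ (t+1) s' - dref (t+1) s'|
            ≤ ∑ s', ∑ s, (|dπ t s - dref t s| * ∑ a, πref s a * P s a s'
                + dπ t s * ∑ a, |π s a - πref s a| * P s a s') :=
              Finset.sum_le_sum fun s' _ => hb s'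
          _ = ∑ s, (|dπ t s - dref t s| + dπ t s * ∑ a, |π s a - πref s a|) := by
              rw [Finset.sum_comm]
              apply Finset.sum_congr rfl; intro s _
              have e1 : ∑ s', ∑ a, πref s a * P s a s' = 1 := by
                rw [Finset.sum_comm]
                simp_rw [← Finset.mul_sum, hP1, mul_one]
                exact href1 s
              have e2 : ∑ s', ∑ a, |π s a - πref s a| * P s a s'
                  = ∑ a, |π s a - πref s a| := by
                rw [Finset.sum_comm]
                simp_rw [← Finset.mul_sum, hP1, mul_one]
              rw [Finset.sum_add_distrib, ← Finset.mul_sum, ← Finset.mul_sum, e1, e2, mul_one]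
          _ ≤ (∑ s, |dπ t s - dref t s|) + Real.sqrt (2*ε) := by
              rw [Finset.sum_add_distrib]
              gcongr with s _
              calc ∑ s, dπ t s * ∑ a, |π s a - πref s a|
                  ≤ ∑ s, dπ t s * Real.sqrt (2*ε) :=
                    Finset.sum_le_sum fun s _ => mul_le_mul_of_nonneg_left (hTV s) (hdπ0 t s)
                _ = Real.sqrt (2*ε) := by rw [← Finset.sum_mul, hdπ1, one_mul]
      calc ∑ s', |dπ (t+1) s' - dref (t+1) s'|
          ≤ (∑ s, |dπ t s - dref t s|) + Real.sqrt (2*ε) := step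
        _ ≤ (t : ℝ) * Real.sqrt (2*ε) + Real.sqrt (2*ε) := by linarith
        _ = ((t+1 : ℕ) : ℝ) * Real.sqrt (2*ε) := by push_cast; ring
  -- conclusion
  intro t ht s hs
  have hone : |dπ t s - dref t s| ≤ (H : ℝ) * Real.sqrt (2*ε) := by
    calc |dπ t s - dref t s| ≤ ∑ s, |dπ t s - dref t s| :=
          Finset.single_le_sum (f := fun s => |dπ t s - dref t s|)
            (fun s _ => abs_nonneg _) (Finset.mem_univ s)
      _ ≤ (t : ℝ) * Real.sqrt (2*ε) := hD t
      _ ≤ (H : ℝ) * Real.sqrt (2*ε) := by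
          have : (t : ℝ) ≤ (H : ℝ) := Nat.cast_le.mpr ht
          exact mul_le_mul_of_nonneg_right this (Real.sqrt_nonneg _)
  have hle : dπ t s ≤ dref t s + (H : ℝ) * Real.sqrt (2*ε) := by
    have := le_of_abs_le hone
    linarith
  have hμρ := hρle s hs
  calc dπ t s / dμ s ≤ (dref t s + (H : ℝ) * Real.sqrt (2*ε)) / dμ s := by
        gcongr
    _ = dref t s / dμ s + (H : ℝ) * Real.sqrt (2*ε) / dμ s := add_div _ _ _
    _ ≤ Cref + (H : ℝ) * Real.sqrt (2 * ε) / ρ := by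
        refine add_le_add (hCref t ht s hs) ?_
        have hnum : 0 ≤ (H : ℝ) * Real.sqrt (2 * ε) :=
          mul_nonneg (Nat.cast_nonneg _) (Real.sqrt_nonneg _)
        gcongr
end
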